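/- arXiv:0803.0999 — 3 statements merged into one kernel-verified Lean document; each statement's English description precedes it below -/
import Mathlib

section
/- For any t₁,...,tₙ ∈ [0,1], the maximum over all probability measures P on [0,1] of ∫ ∏ⱼ (1 - T(i,tⱼ)) dP(i), taken over measurable T : [0,1]×[0,1] → [0,1] satisfying ∫ T(i,t)dP(i) = t for each t (consistency with in-transmissibility) and monotone ordering in i, equals minⱼ(1 - tⱼ), achieved by the threshold function T(i,t) = 1{i < t} with P uniform on [0,1]. -/
open MeasureTheory intervalIntegral

/-- Theorem 3.4 / 4.5: among all infectiousness distributions `P` and ordered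
transmission functions `T` consistent with the in-transmissibilities `tⱼ`,
the escape probability `∫ ∏ⱼ (1 - T(i,tⱼ)) dP(i)` is at most
`minⱼ (1 - tⱼ)`, and this bound is attained by the threshold function
`T(i,t) = 1{i < t}` with `P` uniform on `[0,1]`. -/
theorem escape_probability_max
    (n : ℕ) (hn : 0 < n) (t : Fin n → ℝ)
    (ht : ∀ j, t j ∈ Set.Icc (0:ℝ) 1) :
    (∀ (P : Measure ℝ), IsProbabilityMeasure P →
      ∀ (T : ℝ → ℝ → ℝ), Measurable (Function.uncurry T) →
      (∀ i s, T i s ∈ Set.Icc (0:ℝ) 1) →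
      -- consistency with in-transmissibility
      (∀ j, ∫ i, T i (t j) ∂P = t j) →
      -- ordering assumption
      (∀ i₁ i₂, (∃ s₀, T i₂ s₀ < T i₁ s₀) → ∀ s, T i₂ s ≤ T i₁ s) →
      (∀ j, Integrable (fun i => T i (t j)) P) →
      Integrable (fun i => ∏ j, (1 - T i (t j))) P →
      ∫ i, ∏ j, (1 - T i (t j)) ∂P
        ≤ Finset.univ.inf' (Finset.univ_nonempty_iff.mpr ⟨⟨0, hn⟩⟩)
            (fun j => 1 - t j)) ∧
    (∫ i in (0:ℝ)..1, ∏ j, (1 - if i < t j then (1:ℝ) else 0)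
        = Finset.univ.inf' (Finset.univ_nonempty_iff.mpr ⟨⟨0, hn⟩⟩)
            (fun j => 1 - t j)) := by
  have hne : (Finset.univ : Finset (Fin n)).Nonempty :=
    Finset.univ_nonempty_iff.mpr ⟨⟨0, hn⟩⟩
  set M : ℝ := Finset.univ.sup' hne t with hM
  have hMmem : ∃ j, t j = M := by
    obtain ⟨j, _, hj⟩ := Finset.exists_mem_eq_sup' hne t
    exact ⟨j, hj.symm⟩
  have hM0 : 0 ≤ M := by
    obtain ⟨j, hj⟩ := hMmem; rw [← hj]; exact (ht j).1
  have hM1 : M ≤ 1 := by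
    apply Finset.sup'_le; intro j _; exact (ht j).2
  have hinf : Finset.univ.inf' hne (fun j => 1 - t j) = 1 - M := by
    apply le_antisymm
    · obtain ⟨j, hj⟩ := hMmem
      calc Finset.univ.inf' hne (fun j => 1 - t j) ≤ 1 - t j :=
            Finset.inf'_le _ (Finset.mem_univ j)
        _ = 1 - M := by rw [hj]
    · apply Finset.le_inf'; intro j _
      have : t j ≤ M := Finset.le_sup' t (Finset.mem_univ j)
      linarith
  constructor
  · intro P hP T hTm hT01 hcons hord hint hintprod
    rw [hinf]
    obtain ⟨j, hj⟩ := hMmem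
    have hle : ∀ i, ∏ k, (1 - T i (t k)) ≤ 1 - T i (t j) := by
      intro i
      have h1 : ∏ k, (1 - T i (t k))
          = (1 - T i (t j)) * ∏ k ∈ Finset.univ.erase j, (1 - T i (t k)) :=
        (Finset.mul_prod_erase _ _ (Finset.mem_univ j)).symm
      rw [h1]
      have h2 : ∏ k ∈ Finset.univ.erase j, (1 - T i (t k)) ≤ 1 := by
        apply Finset.prod_le_one
        · intro k _; have := (hT01 i (t k)).2; linarith
        · intro k _; have := (hT01 i (t k)).1; linarith
      have h3 : 0 ≤ 1 - T i (t j) := by have := (hT01 i (t j)).2; linarith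
      calc (1 - T i (t j)) * ∏ k ∈ Finset.univ.erase j, (1 - T i (t k))
          ≤ (1 - T i (t j)) * 1 := by
            apply mul_le_mul_of_nonneg_left h2 h3
        _ = 1 - T i (t j) := mul_one _
    have hint' : Integrable (fun i => 1 - T i (t j)) P :=
      (integrable_const 1).sub (hint j)
    calc ∫ i, ∏ k, (1 - T i (t k)) ∂P
        ≤ ∫ i, (1 - T i (t j)) ∂P := integral_mono hintprod hint' hle
      _ = 1 - t j := by
          rw [integral_sub (integrable_const 1) (hint j), MeasureTheory.integral_const,
            probReal_univ, hcons j]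
          simp
      _ = 1 - M := by rw [hj]
  · rw [hinf]
    have hpt : ∀ i : ℝ, ∏ j, (1 - if i < t j then (1:ℝ) else 0)
        = if i < M then 0 else 1 := by
      intro i
      by_cases h : i < M
      · rw [if_pos h]
        obtain ⟨j, _, hj⟩ := (Finset.lt_sup'_iff hne).mp h
        exact Finset.prod_eq_zero (Finset.mem_univ j) (by rw [if_pos hj]; ring)
      · rw [if_neg h]
        apply Finset.prod_eq_one
        intro j _
        have : ¬ i < t j := by
          intro hc
          exact h (lt_of_lt_of_le hc (Finset.le_sup' t (Finset.mem_univ j)))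
        rw [if_neg this]; ring
    have hcongr : ∫ i in (0:ℝ)..1, ∏ j, (1 - if i < t j then (1:ℝ) else 0)
        = ∫ i in (0:ℝ)..1, (if i < M then (0:ℝ) else 1) := by
      apply intervalIntegral.integral_congr
      intro i _; exact hpt i
    rw [hcongr]
    have hsplit : ∫ i in (0:ℝ)..1, (if i < M then (0:ℝ) else 1)
        = (∫ i in (0:ℝ)..M, (if i < M then (0:ℝ) else 1))
          + ∫ i in M..1, (if i < M then (0:ℝ) else 1) := by
      rw [intervalIntegral.integral_add_adjacent_intervals]
      · apply IntervalIntegrable.mono_fun' (g := fun _ => (1:ℝ))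
          intervalIntegrable_const
        · apply Measurable.aestronglyMeasurable
          exact Measurable.ite (measurableSet_lt measurable_id measurable_const)
            measurable_const measurable_const
        · filter_upwards with i
          by_cases h : i < M <;> simp [h, abs_of_nonneg]
      · apply IntervalIntegrable.mono_fun' (g := fun _ => (1:ℝ))
          intervalIntegrable_const
        · apply Measurable.aestronglyMeasurable
          exact Measurable.ite (measurableSet_lt measurable_id measurable_const)
            measurable_const measurable_const
        · filter_upwards with i
          by_cases h : i < M <;> simp [h, abs_of_nonneg]
    rw [hsplit]
    have h1 : ∫ i in (0:ℝ)..M, (if i < M then (0:ℝ) else 1) = 0 := by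
      rw [intervalIntegral.integral_congr_ae (g := fun _ => (0:ℝ))]
      · simp
      · have hzero : (volume : Measure ℝ) {M} = 0 := measure_singleton M
        rw [ae_iff]
        apply measure_mono_null _ hzero
        intro i hi
        simp only [Set.mem_setOf_eq] at hi
        push_neg at hi
        obtain ⟨hi1, hi2⟩ := hi
        rw [Set.uIoc_of_le hM0] at hi1
        simp only [Set.mem_singleton_iff]
        by_contra hne'
        have : i < M := lt_of_le_of_ne hi1.2 hne'
        rw [if_pos this] at hi2
        exact hi2 rfl
    have h2 : ∫ i in M..1, (if i < M then (0:ℝ) else 1) = 1 - M := by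
      rw [intervalIntegral.integral_congr (g := fun _ => (1:ℝ))]
      · simp
      · intro i hi
        rw [Set.uIcc_of_le hM1] at hi
        have : ¬ i < M := not_lt.mpr hi.1
        simp [this]
    rw [h1, h2, zero_add]
end

section
/- If a random pair (T_out, T_in) arises from independent infectiousness and susceptibility via T_out(i)=∫T(i,s)dP(s), T_in(s)=∫T(i,s)dP(i), and T_in is maximally heterogeneous, i.e. T_in ∈ {0,1} almost surely with P(T_in=1)=⟨T⟩, then T_out = ⟨T⟩ almost surely. -/
open MeasureTheory

/-- If the in-transmissibility is maximally heterogeneous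
(`T_in ∈ {0,1}` a.s. with `P(T_in = 1) = ⟨T⟩`), then the out-transmissibility
is almost surely homogeneous: `T_out = ⟨T⟩` a.e. -/
theorem maximally_heterogeneous_Tin_forces_homogeneous_Tout
    {I S : Type*} [MeasurableSpace I] [MeasurableSpace S]
    (μ : Measure I) (ν : Measure S)
    [IsProbabilityMeasure μ] [IsProbabilityMeasure ν] [SFinite ν]
    (T : I × S → ℝ)
    (hT_meas : Measurable T)
    (hT01 : ∀ p, T p ∈ Set.Icc (0:ℝ) 1)
    (hint : Integrable T (μ.prod ν))
    (Tavg : ℝ)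
    (hhet : ∀ᵐ s ∂ν, (∫ i, T (i, s) ∂μ = 0) ∨ (∫ i, T (i, s) ∂μ = 1))
    (hTavg : (ν {s | ∫ i, T (i, s) ∂μ = 1}).toReal = Tavg) :
    ∀ᵐ i ∂μ, ∫ s, T (i, s) ∂ν = Tavg := by
  set A : Set S := {s | ∫ i, T (i, s) ∂μ = 1} with hA
  have hg : Measurable fun s => ∫ i, T (i, s) ∂μ :=
    (hT_meas.stronglyMeasurable.integral_prod_left').measurable
  have hAmeas : MeasurableSet A := hg (measurableSet_singleton 1)
  -- step: for ν-a.e. s, for μ-a.e. i, T (i,s) = A.indicator 1 s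
  have key : ∀ᵐ s ∂ν, ∀ᵐ i ∂μ, T (i, s) = A.indicator (1 : S → ℝ) s := by
    filter_upwards [hhet, hint.prod_left_ae] with s hs hint_s
    rcases hs with h0 | h1
    · have hsA : s ∉ A := by simp [hA, h0]
      have : (fun i => T (i, s)) =ᵐ[μ] 0 :=
        (integral_eq_zero_iff_of_nonneg (fun i => (hT01 (i, s)).1) hint_s).mp h0
      filter_upwards [this] with i hi
      simp [hi, Set.indicator_of_notMem hsA]
    · have hsA : s ∈ A := h1
      have hint1 : Integrable (fun i => 1 - T (i, s)) μ :=
        (integrable_const 1).sub hint_s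
      have h0 : ∫ i, (1 - T (i, s)) ∂μ = 0 := by
        rw [integral_sub (integrable_const 1) hint_s, h1]
        simp
      have : (fun i => 1 - T (i, s)) =ᵐ[μ] 0 :=
        (integral_eq_zero_iff_of_nonneg (fun i => sub_nonneg.mpr (hT01 (i, s)).2) hint1).mp h0
      filter_upwards [this] with i hi
      have : T (i, s) = 1 := by
        have := hi; simp at this; linarith
      simp [this, Set.indicator_of_mem hsA]
  -- swap the order of quantifiers using measurability
  have hset : MeasurableSet {q : S × I | T (q.2, q.1) = A.indicator (1 : S → ℝ) q.1} := by
    have h1 : Measurable fun q : S × I => T (q.2, q.1) := hT_meas.comp (by fun_prop)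
    have h2 : Measurable fun q : S × I => A.indicator (1 : S → ℝ) q.1 :=
      (measurable_const.indicator hAmeas).comp measurable_fst
    exact measurableSet_eq_fun h1 h2
  have hprod : ∀ᵐ q ∂ν.prod μ, T (q.2, q.1) = A.indicator (1 : S → ℝ) q.1 :=
    (Measure.ae_prod_iff_ae_ae hset).mpr key
  have hswap : ∀ᵐ p ∂μ.prod ν, T p = A.indicator (1 : S → ℝ) p.2 := by
    rw [← Measure.prod_swap] at hprod
    have := ae_of_ae_map (by fun_prop : AEMeasurable Prod.swap (μ.prod ν)) hprod
    filter_upwards [this] with p hp using hp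
  have final := Measure.ae_ae_of_ae_prod hswap
  filter_upwards [final] with i hi
  calc ∫ s, T (i, s) ∂ν = ∫ s, A.indicator (1 : S → ℝ) s ∂ν := integral_congr_ae hi
    _ = (ν A).toReal := integral_indicator_one hAmeas
    _ = Tavg := hTavg
end

section
/- If the transmission function satisfies the ordering assumption, then the map i ↦ T_out(i) is injective on equivalence classes: T_out(i₁) = T_out(i₂) implies T(i₁,s) = T(i₂,s) for P(𝓢)-almost every s. -/
open MeasureTheory

lemma aux_eq_of_le_integral_eq
    {S : Type*} [MeasurableSpace S] (ν : Measure S)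
    (f g : S → ℝ) (hf : Integrable f ν) (hg : Integrable g ν)
    (hle : ∀ s, f s ≤ g s) (heq : ∫ s, f s ∂ν = ∫ s, g s ∂ν) :
    ∀ᵐ s ∂ν, f s = g s := by
  have h0 : ∫ s, (g s - f s) ∂ν = 0 := by
    rw [integral_sub hg hf]; linarith
  have hnn : 0 ≤ᵐ[ν] fun s => g s - f s :=
    Filter.Eventually.of_forall fun s => by simp only [Pi.zero_apply]; linarith [hle s]
  have := (integral_eq_zero_iff_of_nonneg_ae hnn (hg.sub hf)).mp h0
  filter_upwards [this] with s hs
  have : g s - f s = 0 := hs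
  linarith

/-- Under the ordering assumption, equal out-transmissibilities force almost
everywhere equal transmission profiles: `T_out(i₁) = T_out(i₂)` implies
`T(i₁,s) = T(i₂,s)` for `P(𝓢)`-a.e. `s`. -/
theorem ordering_Tout_injective
    {I S : Type*} [MeasurableSpace S]
    (ν : Measure S) [IsProbabilityMeasure ν]
    (T : I → S → ℝ)
    (hT01 : ∀ i s, T i s ∈ Set.Icc (0:ℝ) 1)
    (hmeas : ∀ i, Measurable (T i))
    (hint : ∀ i, Integrable (T i) ν)
    -- ordering assumption
    (horder : ∀ i₁ i₂, (∃ s₀, T i₂ s₀ < T i₁ s₀) →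
      (∀ s, T i₂ s ≤ T i₁ s) ∧ 0 < ν {s | T i₂ s < T i₁ s})
    (i₁ i₂ : I)
    (hout : ∫ s, T i₁ s ∂ν = ∫ s, T i₂ s ∂ν) :
    ∀ᵐ s ∂ν, T i₁ s = T i₂ s := by
  by_cases h1 : ∃ s₀, T i₂ s₀ < T i₁ s₀
  · obtain ⟨hle, hpos⟩ := horder i₁ i₂ h1
    have hae := aux_eq_of_le_integral_eq ν _ _ (hint i₂) (hint i₁) hle hout.symm
    have hnull : ν {s | T i₂ s < T i₁ s} = 0 := by
      refine measure_mono_null (fun s hs => ?_) (ae_iff.mp hae)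
      simp only [Set.mem_setOf_eq] at hs ⊢
      exact ne_of_lt hs
    exact absurd hnull (ne_of_gt hpos)
  · by_cases h2 : ∃ s₀, T i₁ s₀ < T i₂ s₀
    · obtain ⟨hle, hpos⟩ := horder i₂ i₁ h2
      have hae := aux_eq_of_le_integral_eq ν _ _ (hint i₁) (hint i₂) hle hout
      have hnull : ν {s | T i₁ s < T i₂ s} = 0 := by
        refine measure_mono_null (fun s hs => ?_) (ae_iff.mp hae)
        simp only [Set.mem_setOf_eq] at hs ⊢
        exact ne_of_lt hs
      exact absurd hnull (ne_of_gt hpos)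
    · push_neg at h1 h2
      exact Filter.Eventually.of_forall fun s => le_antisymm (h1 s) (h2 s)
end
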